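/- The GREG estimator â = (1/N) Σ_{i∈U} m̂(x_i) + (1/N) Σ_{i∈S} (y_i − m̂(x_i))/π_i, with m̂(x) = xᵀ Q Σ_{j∈S} x_j y_j/π_j and Q = (Σ_{i∈U} x_i x_iᵀ)^{-1}, equals (1/N²) Σ_{i∈U} Σ_{j∈U} h*(z_i,z_j) where h*(z_i,z_j) = (1/2)[ (1 + N((1/N)t_xᵀ − (I_j/π_j)x_jᵀ) Q x_i)(y_i I_i/π_i) + (1 + N((1/N)t_xᵀ − (I_i/π_i)x_iᵀ) Q x_j)(y_j I_j/π_j) ] and t_x = Σ_{i∈U} x_i. -/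

import Mathlib

open Matrix

section Helpers

variable {p : ℕ} {ι : Type*}

lemma dot_mulVec_sum (v : Fin p → ℝ) (Q : Matrix (Fin p) (Fin p) ℝ)
    (s : Finset ι) (f : ι → Fin p → ℝ) :
    v ⬝ᵥ Q.mulVec (∑ j ∈ s, f j) = ∑ j ∈ s, v ⬝ᵥ Q.mulVec (f j) := by
  classical
  induction s using Finset.induction with
  | empty => simp [Matrix.mulVec_zero]
  | @insert _ _ h ih =>
      simp [Finset.sum_insert h, Matrix.mulVec_add, dotProduct_add, ih]

lemma dot_mulVec_smul (v : Fin p → ℝ) (Q : Matrix (Fin p) (Fin p) ℝ)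
    (c : ℝ) (w : Fin p → ℝ) :
    v ⬝ᵥ Q.mulVec (c • w) = c * (v ⬝ᵥ Q.mulVec w) := by
  rw [Matrix.mulVec_smul, dotProduct_smul, smul_eq_mul]

lemma sum_dot (s : Finset ι) (f : ι → Fin p → ℝ) (w : Fin p → ℝ) :
    (∑ j ∈ s, f j) ⬝ᵥ w = ∑ j ∈ s, f j ⬝ᵥ w := by
  classical
  induction s using Finset.induction with
  | empty => simp
  | @insert _ _ h ih => simp [Finset.sum_insert h, add_dotProduct, ih]

end Helpers

/-- Proposition 2: the GREG estimator is a degree-2 V-statistic with the stated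
symmetric kernel `h*`. -/
theorem stmt6 (N p : ℕ) (x : Fin N → Fin p → ℝ) (y π : Fin N → ℝ)
    (hπ : ∀ i, 0 < π i ∧ π i ≤ 1) (I : Fin N → Bool)
    (Q : Matrix (Fin p) (Fin p) ℝ)
    (hQ : Q = (∑ i, Matrix.vecMulVec (x i) (x i))⁻¹) :
    let ind : Fin N → ℝ := fun i => if I i then 1 else 0
    let tx : Fin p → ℝ := ∑ i, x i
    let mhat : (Fin p → ℝ) → ℝ := fun v =>
      v ⬝ᵥ Q.mulVec (∑ j ∈ Finset.univ.filter (fun j => I j), (y j / π j) • x j)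
    let hstar : Fin N → Fin N → ℝ := fun i j =>
      (1 / 2) *
        ((1 + (N : ℝ) * (((1 / (N : ℝ)) • tx - (ind j / π j) • x j) ⬝ᵥ Q.mulVec (x i)))
            * (y i * ind i / π i)
          + (1 + (N : ℝ) * (((1 / (N : ℝ)) • tx - (ind i / π i) • x i) ⬝ᵥ Q.mulVec (x j)))
            * (y j * ind j / π j))
    (1 / (N : ℝ)) * ∑ i, mhat (x i)
        + (1 / (N : ℝ)) * ∑ i ∈ Finset.univ.filter (fun i => I i), (y i - mhat (x i)) / π i
      = (1 / (N : ℝ) ^ 2) * ∑ i, ∑ j, hstar i j := by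
  intro ind tx mhat hstar
  classical
  rcases Nat.eq_zero_or_pos N with hN | hN
  · subst hN
    simp
  have hc : (N : ℝ) ≠ 0 := Nat.cast_ne_zero.mpr hN.ne'
  set c : ℝ := (N : ℝ) with hcdef
  set a : Fin N → ℝ := fun i => y i * ind i / π i with ha
  set d : Fin N → ℝ := fun i => ind i / π i with hd
  set B : Fin N → Fin N → ℝ := fun i j => x i ⬝ᵥ Q.mulVec (x j) with hBdef
  -- the regression vector as a full-population sum
  have hu : (∑ j ∈ Finset.univ.filter (fun j => I j), (y j / π j) • x j)
      = ∑ j, a j • x j := by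
    rw [Finset.sum_filter]
    refine Finset.sum_congr rfl fun j _ => ?_
    by_cases h : I j <;> simp [ha, ind, h]
  have hm : ∀ i, mhat (x i) = ∑ j, a j * B i j := by
    intro i
    simp only [mhat, hu, dot_mulVec_sum, dot_mulVec_smul]
    rfl
  have ht : ∀ i, tx ⬝ᵥ Q.mulVec (x i) = ∑ j, B j i := by
    intro i
    simp only [tx, sum_dot]
    rfl
  -- pointwise simplification of the kernel
  have hP : ∀ i j, hstar i j =
      (1 / 2) * (((1 + (∑ k, B k i) - c * (d j * B j i)) * a i)
        + ((1 + (∑ k, B k j) - c * (d i * B i j)) * a j)) := by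
    intro i j
    have key : ∀ i j : Fin N,
        (1 + c * (((1 / c) • tx - (ind j / π j) • x j) ⬝ᵥ Q.mulVec (x i)))
          = 1 + (∑ k, B k i) - c * (d j * B j i) := by
      intro i j
      have cancel : ∀ S e : ℝ, c * ((1 / c) * S - e) = S - c * e := fun S e => by
        rw [mul_sub, ← mul_assoc, mul_one_div_cancel hc, one_mul]
      rw [sub_dotProduct, smul_dotProduct, smul_dotProduct,
        smul_eq_mul, smul_eq_mul, ht i, cancel]
      simp only [hd, hBdef]
      ring
    simp only [hstar, ← hcdef, key i j, key j i, ha]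
  -- rewrite the double sum of the kernel
  have hsum : (∑ i, ∑ j, hstar i j)
      = c * (∑ i, a i) + c * (∑ i, ∑ j, a i * B j i)
        - c * (∑ i, ∑ j, d i * (a j * B i j)) := by
    have h1 : (∑ i, ∑ j, hstar i j)
        = ∑ i, ∑ j, (1 + (∑ k, B k i) - c * (d j * B j i)) * a i := by
      have hswap : (∑ i, ∑ j, (1 + (∑ k, B k j) - c * (d i * B i j)) * a j)
          = ∑ i, ∑ j, (1 + (∑ k, B k i) - c * (d j * B j i)) * a i :=
        Finset.sum_comm
      calc (∑ i, ∑ j, hstar i j)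
          = ∑ i, ∑ j, (1 / 2) * (((1 + (∑ k, B k i) - c * (d j * B j i)) * a i)
              + ((1 + (∑ k, B k j) - c * (d i * B i j)) * a j)) := by
            exact Finset.sum_congr rfl fun i _ => Finset.sum_congr rfl fun j _ => hP i j
        _ = (1 / 2) * ((∑ i, ∑ j, (1 + (∑ k, B k i) - c * (d j * B j i)) * a i)
              + (∑ i, ∑ j, (1 + (∑ k, B k j) - c * (d i * B i j)) * a j)) := by
            simp only [← Finset.sum_add_distrib, ← Finset.mul_sum]
        _ = ∑ i, ∑ j, (1 + (∑ k, B k i) - c * (d j * B j i)) * a i := by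
            rw [hswap]; ring
    rw [h1]
    have h2 : ∀ i, (∑ j, (1 + (∑ k, B k i) - c * (d j * B j i)) * a i)
        = c * a i + c * (a i * ∑ k, B k i) - c * (∑ j, d j * (a i * B j i)) := by
      intro i
      have : (∑ j, (1 + (∑ k, B k i) - c * (d j * B j i)) * a i)
          = (∑ j : Fin N, (a i + (∑ k, B k i) * a i)) - ∑ j, c * (d j * B j i) * a i := by
        rw [← Finset.sum_sub_distrib]
        exact Finset.sum_congr rfl fun j _ => by ring
      rw [this, Finset.sum_const, Finset.card_univ, Fintype.card_fin, nsmul_eq_mul]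
      have h3 : (∑ j, c * (d j * B j i) * a i) = c * ∑ j, d j * (a i * B j i) := by
        rw [Finset.mul_sum]; exact Finset.sum_congr rfl fun j _ => by ring
      rw [h3]; ring
    rw [Finset.sum_congr rfl fun i _ => h2 i]
    rw [Finset.sum_sub_distrib, Finset.sum_add_distrib, ← Finset.mul_sum, ← Finset.mul_sum,
      ← Finset.mul_sum]
    have e1 : (∑ i, a i * ∑ k, B k i) = ∑ i, ∑ j, a i * B j i := by
      exact Finset.sum_congr rfl fun i _ => Finset.mul_sum _ _ _
    have e2 : (∑ i, ∑ j, d j * (a i * B j i)) = ∑ i, ∑ j, d i * (a j * B i j) :=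
      Finset.sum_comm
    rw [e1, e2]
  -- rewrite the left-hand side
  have hA : (∑ i, mhat (x i)) = ∑ i, ∑ j, a i * B j i := by
    rw [Finset.sum_congr rfl fun i _ => hm i]
    exact Finset.sum_comm.trans (Finset.sum_congr rfl fun i _ =>
      Finset.sum_congr rfl fun j _ => rfl)
  have hB : (∑ i ∈ Finset.univ.filter (fun i => I i), (y i - mhat (x i)) / π i)
      = (∑ i, a i) - ∑ i, ∑ j, d i * (a j * B i j) := by
    rw [Finset.sum_filter, ← Finset.sum_sub_distrib]
    refine Finset.sum_congr rfl fun i _ => ?_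
    by_cases h : I i
    · simp only [h, if_true, hm i]
      rw [sub_div, Finset.sum_div]
      congr 1
      · simp [ha, ind, h]
      · refine Finset.sum_congr rfl fun j _ => ?_
        simp only [hd, ind, h, if_true]
        ring
    · simp [ha, hd, ind, h]
  rw [hA, hB, hsum]
  field_simp
  ring
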